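/- Let R be a unital non-associative ring, G a commutative monoid, π a strong G-derivation on R, and S = R[G;π] the Ore monoid ring. If s ∈ S^G, then s ∈ Z(S) if and only if s commutes and associates with all elements of R, i.e. for all r,t ∈ R one has [s,r] = 0 and (s,r,t) = (r,s,t) = (r,t,s) = 0. -/

import Mathlib

open scoped Classical

/-! Common framework: Ore monoid rings `R[G;π]` over a unital non-associative ring `R`
and a monoid `G`.  A `G`-derivation `π = {π^a_b}` is encoded as a map
`π : G → R → (G →₀ R)`, where `π a r b = π^a_b(r)`; axiom (D0) (finite support in `b`)
is built into the `Finsupp` encoding.  The Ore monoid ring `S = R[G;π]` is the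
additive group `G →₀ R` of finitely supported formal sums `Σ r_a xᵃ`
(with `Finsupp.single a r` representing `r xᵃ`), equipped with the
multiplication `GDeriv.mul` below. -/

/-- A two-sided ideal with respect to a (possibly non-associative, non-unital)
multiplication `m` on an additive group `A`. -/
structure IsIdealWith {A : Type*} [AddCommGroup A] (m : A → A → A) (J : Set A) : Prop where
  zero_mem : (0 : A) ∈ J
  add_mem : ∀ {x y : A}, x ∈ J → y ∈ J → x + y ∈ J
  neg_mem : ∀ {x : A}, x ∈ J → -x ∈ J
  mul_mem_left : ∀ (r : A) {x : A}, x ∈ J → m r x ∈ J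
  mul_mem_right : ∀ {x : A} (r : A), x ∈ J → m x r ∈ J

/-- The subset `F` of `A` is a field with respect to the multiplication `m` with
identity `one`: it is a commutative unital subring in which every nonzero element
has a multiplicative inverse. -/
def IsFieldWith {A : Type*} [AddCommGroup A] (m : A → A → A) (one : A) (F : Set A) : Prop :=
  one ∈ F ∧ (∀ x ∈ F, ∀ y ∈ F, x + y ∈ F) ∧ (∀ x ∈ F, -x ∈ F) ∧
  (∀ x ∈ F, ∀ y ∈ F, m x y ∈ F) ∧ (∀ x ∈ F, ∀ y ∈ F, m x y = m y x) ∧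
  (∀ x ∈ F, x ≠ 0 → ∃ y ∈ F, m x y = one ∧ m y x = one)

/-- A `G`-derivation on `R`: axioms (D0)–(D4).  Here `π a r b` denotes `π^a_b(r)`,
and (D0) holds by the finite support of `π a r : G →₀ R`. -/
structure GDeriv (R : Type*) [NonAssocRing R] (G : Type*) [Monoid G] where
  /-- the family of maps; `π a r b = π^a_b(r)` -/
  π : G → R → (G →₀ R)
  /-- (D1): `π^e_e = id` and `π^e_a = 0` for `a ≠ e` -/
  d1 : ∀ r : R, π 1 r = Finsupp.single 1 r
  /-- (D2): `π^a_b(1) = δ_{a,b}` -/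
  d2 : ∀ a : G, π a (1 : R) = Finsupp.single a (1 : R)
  /-- (D3): each `π^a_b` is additive -/
  d3 : ∀ (a : G) (r s : R), π a (r + s) = π a r + π a s
  /-- (D4): `π^{ab}_c = Σ_{df = c} π^a_d ∘ π^b_f` -/
  d4 : ∀ (a b : G) (r : R),
    π (a * b) r = (π b r).sum fun f s => (π a s).sum fun d t => Finsupp.single (d * f) t

namespace GDeriv

variable {R : Type*} [NonAssocRing R] {G : Type*} [Monoid G] (P : GDeriv R G)

/-- The multiplication of the Ore monoid ring `S = R[G;π]` on `G →₀ R`: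
the biadditive extension of `(r xᵃ)(s xᵇ) = Σ_c r π^a_c(s) x^{cb}`. -/
noncomputable def mul (u v : G →₀ R) : G →₀ R :=
  u.sum fun a r => v.sum fun b s => (P.π a s).sum fun c t => Finsupp.single (c * b) (r * t)

/-- The multiplicative identity `1·xᵉ` of `S`. -/
noncomputable def one (_P : GDeriv R G) : G →₀ R := Finsupp.single 1 1

/-- `R^G = {r ∈ R : π^a_b(r) = δ_{a,b} r}`. -/
def fixed : Set R := {r | ∀ a : G, P.π a r = Finsupp.single a r}

/-- `S^G = Σ_a R^G xᵃ`, the elements of `S` all of whose coefficients lie in `R^G`. -/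
def fixedS : Set (G →₀ R) := {u | ∀ c : G, u c ∈ P.fixed}

/-- (D7): every `π^a_b` is left `R^G`-linear. -/
def LeftLinear : Prop := ∀ a b : G, ∀ s ∈ P.fixed, ∀ r : R, P.π a (s * r) b = s * P.π a r b

/-- (D8): every `π^a_b` is right `R^G`-linear. -/
def RightLinear : Prop := ∀ a b : G, ∀ r : R, ∀ s ∈ P.fixed, P.π a (r * s) b = P.π a r b * s

/-- `π` is strong if (D7) or (D8) holds. -/
def Strong : Prop := P.LeftLinear ∨ P.RightLinear

/-- (D6): `π^a_a = id_R` for all `a ∈ G` (i.e. `π` is unital). -/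
def Unital : Prop := ∀ (a : G) (r : R), P.π a r a = r

/-- `π` is commutative: `π^a_b ∘ π^c_d = π^c_d ∘ π^a_b`. -/
def Commutes : Prop := ∀ (a b c d : G) (r : R), P.π a (P.π c r d) b = P.π c (P.π a r b) d

/-- `π` is well-ordered: there is a well-order on `G` whose strict part `lt`
satisfies `π^a_b = 0` whenever `a ≺ b`. -/
def WellOrdered : Prop :=
  ∃ lt : G → G → Prop, IsWellOrder G lt ∧ ∀ a b : G, lt a b → ∀ r : R, P.π a r b = 0

/-- The extension `π̃^a_b : S → S`, `π̃^a_b(Σ_c r_c x^c) = Σ_c π^a_b(r_c) x^c`. -/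
noncomputable def ext (a b : G) (u : G →₀ R) : G →₀ R := u.sum fun c r => Finsupp.single c (P.π a r b)

/-- The commutator `[u,v] = uv - vu` in `S`. -/
noncomputable def commS (u v : G →₀ R) : G →₀ R := P.mul u v - P.mul v u

/-- The associator `(u,v,w) = (uv)w - u(vw)` in `S`. -/
noncomputable def assocS (u v w : G →₀ R) : G →₀ R := P.mul (P.mul u v) w - P.mul u (P.mul v w)

/-- The left nucleus `N_l(S)`. -/
def Nl : Set (G →₀ R) := {u | ∀ v w, P.assocS u v w = 0}

/-- The middle nucleus `N_m(S)`. -/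
def Nm : Set (G →₀ R) := {u | ∀ v w, P.assocS v u w = 0}

/-- The right nucleus `N_r(S)`. -/
def Nr : Set (G →₀ R) := {u | ∀ v w, P.assocS v w u = 0}

/-- The commuter `C(S)`. -/
def CS : Set (G →₀ R) := {u | ∀ v, P.mul u v = P.mul v u}

/-- The center `Z(S) = C(S) ∩ N_l(S) ∩ N_m(S) ∩ N_r(S)`. -/
def Z : Set (G →₀ R) := P.CS ∩ (P.Nl ∩ P.Nm ∩ P.Nr)

/-- `Z(S)^G = {s ∈ Z(S) : π̃^a_b(s) = δ_{a,b} s}`. -/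
def ZG : Set (G →₀ R) :=
  {s | s ∈ P.Z ∧ ∀ a b : G, P.ext a b s = if a = b then s else 0}

/-- `R` is `G`-simple: `{0}` and `R` are the only `G`-invariant ideals of `R`. -/
def RSimple : Prop :=
  ∀ J : Set R, IsIdealWith (· * ·) J → (∀ a b : G, ∀ r ∈ J, P.π a r b ∈ J) →
    J = {0} ∨ J = Set.univ

/-- `S` is `G`-simple: `{0}` and `S` are the only ideals of `S` invariant under all `π̃^a_b`. -/
def SSimple : Prop :=
  ∀ J : Set (G →₀ R), IsIdealWith P.mul J → (∀ a b : G, ∀ u ∈ J, P.ext a b u ∈ J) →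
    J = {0} ∨ J = Set.univ

end GDeriv

namespace StmtAux
set_option linter.unusedSectionVars false
set_option linter.unusedVariables false
set_option linter.unusedTactic false
open Finsupp

variable {R : Type*} [NonAssocRing R] {G : Type*} [CommMonoid G] (P : GDeriv R G)

lemma pi_zero (a : G) : P.π a 0 = 0 := by
  have h := P.d3 a 0 0
  rw [add_zero] at h
  exact add_left_cancel (a := P.π a 0) (by rw [add_zero]; exact h.symm)

lemma mul_def (u v : G →₀ R) : P.mul u v =
    u.sum fun a r => v.sum fun b t => (P.π a t).sum fun c w => Finsupp.single (c*b) (r*w) := rfl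

lemma mul_single_left (a : G) (r : R) (v : G →₀ R) :
    P.mul (Finsupp.single a r) v =
      v.sum fun b t => (P.π a t).sum fun c w => Finsupp.single (c*b) (r*w) := by
  rw [mul_def]
  exact Finsupp.sum_single_index (by simp)

lemma mul_single_single (a : G) (r : R) (b : G) (t : R) :
    P.mul (Finsupp.single a r) (Finsupp.single b t) =
      (P.π a t).sum fun c w => Finsupp.single (c*b) (r*w) := by
  rw [mul_single_left]
  exact Finsupp.sum_single_index (by simp [pi_zero])

lemma mul_zero_left (v : G →₀ R) : P.mul 0 v = 0 := by
  rw [mul_def]; exact Finsupp.sum_zero_index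

lemma mul_zero_right (u : G →₀ R) : P.mul u 0 = 0 := by
  rw [mul_def]; simp

lemma mul_add_left (u v w : G →₀ R) : P.mul (u+v) w = P.mul u w + P.mul v w := by
  rw [mul_def, mul_def, mul_def]
  exact Finsupp.sum_add_index' (by simp)
    (fun a r₁ r₂ => by
      rw [← Finsupp.sum_add]
      refine Finsupp.sum_congr fun b hb => ?_
      rw [← Finsupp.sum_add]
      exact Finsupp.sum_congr fun c hc => by rw [add_mul, Finsupp.single_add])

lemma mul_add_right (u v w : G →₀ R) : P.mul u (v+w) = P.mul u v + P.mul u w := by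
  rw [mul_def, mul_def, mul_def, ← Finsupp.sum_add]
  refine Finsupp.sum_congr fun a ha => ?_
  exact Finsupp.sum_add_index' (by simp [pi_zero])
    (fun b t₁ t₂ => by
      rw [P.d3]
      exact Finsupp.sum_add_index' (by simp) (fun c w₁ w₂ => by rw [mul_add, Finsupp.single_add]))

section Aux2
open Finsupp
variable {R : Type*} [NonAssocRing R] {G : Type*} [CommMonoid G] (P : GDeriv R G)

lemma sum_single_shape {N : Type*} [AddCommMonoid N] (s : G →₀ R) (idx : G → G)
    (φ : G → R → R) (F : G → R → N) (h0 : ∀ g, F g 0 = 0)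
    (hadd : ∀ g x y, F g (x+y) = F g x + F g y) :
    ((s.sum fun h q => Finsupp.single (idx h) (φ h q)).sum F)
      = s.sum fun h q => F (idx h) (φ h q) := by
  rw [Finsupp.sum_sum_index h0 hadd]
  exact Finsupp.sum_congr fun h _ => Finsupp.sum_single_index (h0 _)

lemma sum_double_shape {N : Type*} [AddCommMonoid N] (s : G →₀ R) (m : G → R → (G →₀ R))
    (idx : G → R → G → G) (ψ : G → R → G → R → R) (F : G → R → N) (h0 : ∀ g, F g 0 = 0)
    (hadd : ∀ g x y, F g (x+y) = F g x + F g y) :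
    ((s.sum fun h q => (m h q).sum fun d w => Finsupp.single (idx h q d) (ψ h q d w)).sum F)
      = s.sum fun h q => (m h q).sum fun d w => F (idx h q d) (ψ h q d w) := by
  rw [Finsupp.sum_sum_index h0 hadd]
  refine Finsupp.sum_congr fun h _ => ?_
  rw [Finsupp.sum_sum_index h0 hadd]
  exact Finsupp.sum_congr fun d _ => Finsupp.sum_single_index (h0 _)

lemma shift1 (k : G) (s : G →₀ R) (idx : G → G) (φ : G → R → R) :
    Finsupp.mapDomain (· * k) (s.sum fun h q => Finsupp.single (idx h) (φ h q))
      = s.sum fun h q => Finsupp.single (idx h * k) (φ h q) := by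
  rw [Finsupp.mapDomain_sum]
  exact Finsupp.sum_congr fun h _ => Finsupp.mapDomain_single

lemma shift2 (k : G) (s : G →₀ R) (m : G → R → (G →₀ R)) (idx : G → R → G → G)
    (ψ : G → R → G → R → R) :
    Finsupp.mapDomain (· * k) (s.sum fun h q => (m h q).sum fun d w =>
        Finsupp.single (idx h q d) (ψ h q d w))
      = s.sum fun h q => (m h q).sum fun d w => Finsupp.single (idx h q d * k) (ψ h q d w) := by
  rw [Finsupp.mapDomain_sum]
  refine Finsupp.sum_congr fun h _ => ?_
  rw [Finsupp.mapDomain_sum]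
  exact Finsupp.sum_congr fun d _ => Finsupp.mapDomain_single

lemma mul_fixed_right {s : G →₀ R} (hs : s ∈ P.fixedS) (v : G →₀ R) :
    P.mul v s = v.sum fun g x => s.sum fun h q => Finsupp.single (g*h) (x*q) := by
  rw [StmtAux.mul_def]
  refine Finsupp.sum_congr fun g _ => ?_
  refine Finsupp.sum_congr fun h _ => ?_
  rw [hs h g]
  exact Finsupp.sum_single_index (by simp)

lemma single_mul_fixed {s : G →₀ R} (hs : s ∈ P.fixedS) (a : G) (r : R) :
    P.mul (Finsupp.single a r) s = s.sum fun h q => Finsupp.single (a*h) (r*q) := by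
  rw [mul_fixed_right P hs]
  exact Finsupp.sum_single_index (by simp)

lemma one_mul_fixed {s : G →₀ R} (hs : s ∈ P.fixedS) (r : R) :
    P.mul (Finsupp.single 1 r) s = s.sum fun h q => Finsupp.single h (r*q) := by
  rw [single_mul_fixed P hs]
  simp only [one_mul]

lemma mul_s_single_raw (s : G →₀ R) (g : G) (r : R) :
    P.mul s (Finsupp.single g r)
      = s.sum fun h q => (P.π h r).sum fun c w => Finsupp.single (c*g) (q*w) := by
  rw [StmtAux.mul_def]
  refine Finsupp.sum_congr fun h _ => ?_
  exact Finsupp.sum_single_index (by simp [StmtAux.pi_zero])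

lemma mul_s_single_one_raw (s : G →₀ R) (u : R) :
    P.mul s (Finsupp.single 1 u)
      = s.sum fun h q => (P.π h u).sum fun c w => Finsupp.single c (q*w) := by
  rw [mul_s_single_raw]
  simp only [mul_one]

lemma mul_s_single_one {s : G →₀ R} (hs : s ∈ P.fixedS)
    (hc : ∀ r : R, P.mul s (Finsupp.single 1 r) = P.mul (Finsupp.single 1 r) s) (r : R) :
    P.mul s (Finsupp.single 1 r) = s.sum fun h q => Finsupp.single h (r*q) := by
  rw [hc, one_mul_fixed P hs]

lemma H1fin {s : G →₀ R} (hs : s ∈ P.fixedS)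
    (hc : ∀ r : R, P.mul s (Finsupp.single 1 r) = P.mul (Finsupp.single 1 r) s) (u : R) :
    (s.sum fun h q => (P.π h u).sum fun c w => Finsupp.single c (q*w))
      = s.sum fun h q => Finsupp.single h (u*q) := by
  rw [← mul_s_single_one_raw, hc, one_mul_fixed P hs]

end Aux2

section Aux3
open Finsupp
variable {R : Type*} [NonAssocRing R] {G : Type*} [CommMonoid G] (P : GDeriv R G)

/-- d4 expansion, order `π h ∘ π a`. -/
lemma pi_mul_sum {N : Type*} [AddCommMonoid N] (a h : G) (t : R) (F : G → R → N)
    (h0 : ∀ g, F g 0 = 0) (hadd : ∀ g x y, F g (x+y) = F g x + F g y) :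
    (P.π (a*h) t).sum F
      = (P.π a t).sum fun f u => (P.π h u).sum fun d w => F (d*f) w := by
  rw [mul_comm a h, P.d4 h a t, Finsupp.sum_sum_index h0 hadd]
  refine Finsupp.sum_congr fun f _ => ?_
  rw [Finsupp.sum_sum_index h0 hadd]
  exact Finsupp.sum_congr fun d _ => Finsupp.sum_single_index (h0 _)

/-- d4 expansion, order `π a ∘ π h`. -/
lemma pi_mul_sum' {N : Type*} [AddCommMonoid N] (a h : G) (t : R) (F : G → R → N)
    (h0 : ∀ g, F g 0 = 0) (hadd : ∀ g x y, F g (x+y) = F g x + F g y) :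
    (P.π (a*h) t).sum F
      = (P.π h t).sum fun f u => (P.π a u).sum fun d w => F (d*f) w := by
  rw [P.d4 a h t, Finsupp.sum_sum_index h0 hadd]
  refine Finsupp.sum_congr fun f _ => ?_
  rw [Finsupp.sum_sum_index h0 hadd]
  exact Finsupp.sum_congr fun d _ => Finsupp.sum_single_index (h0 _)

lemma mul_sumform_single (s : G →₀ R) (idx : G → G) (φ : G → R → R)
    (h0 : ∀ h, φ h 0 = 0) (hadd : ∀ h x y, φ h (x+y) = φ h x + φ h y) (b : G) (t : R) :
    P.mul (s.sum fun h q => Finsupp.single (idx h) (φ h q)) (Finsupp.single b t)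
      = s.sum fun h q => (P.π (idx h) t).sum fun c w =>
          Finsupp.single (c*b) (φ h q * w) := by
  rw [StmtAux.mul_def]
  rw [sum_single_shape s idx φ _
    (by intro g; simp)
    (by intro g x y
        rw [← Finsupp.sum_add]
        refine Finsupp.sum_congr fun b' _ => ?_
        rw [← Finsupp.sum_add]
        exact Finsupp.sum_congr fun c _ => by rw [add_mul, Finsupp.single_add])]
  refine Finsupp.sum_congr fun h _ => ?_
  rw [Finsupp.sum_single_index (by simp [StmtAux.pi_zero])]

lemma single_one_mul (r : R) (X : G →₀ R) :
    P.mul (Finsupp.single 1 r) X = X.sum fun g x => Finsupp.single g (r*x) := by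
  rw [StmtAux.mul_single_left]
  refine Finsupp.sum_congr fun g _ => ?_
  rw [P.d1, Finsupp.sum_single_index (by simp), one_mul]

/-- scaled version of `H1fin`. -/
lemma H1fin_r {s : G →₀ R} (hs : s ∈ P.fixedS)
    (hc : ∀ r : R, P.mul s (Finsupp.single 1 r) = P.mul (Finsupp.single 1 r) s) (r u : R) :
    (s.sum fun h q => (P.π h u).sum fun d w => Finsupp.single d (r*(q*w)))
      = s.sum fun h q => Finsupp.single h (r*(u*q)) := by
  have h1 := congrArg (P.mul (Finsupp.single 1 r)) (H1fin P hs hc u)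
  rw [single_one_mul, single_one_mul] at h1
  rw [sum_double_shape s (fun h _ => P.π h u) (fun _ _ d => d)
      (fun _ q _ w => q*w) _ (by intro g; simp) (by intro g x y; rw [mul_add, Finsupp.single_add])] at h1
  rw [sum_single_shape s (fun h => h) (fun _ q => u*q) _
      (by intro g; simp) (by intro g x y; rw [mul_add, Finsupp.single_add])] at h1
  exact h1

lemma pi_mul_fixed_right (hD8 : P.RightLinear) {q : R} (hq : q ∈ P.fixed) (a : G) (t : R) :
    P.π a (t*q) = Finsupp.mapRange (· * q) (zero_mul q) (P.π a t) := by
  ext c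
  rw [Finsupp.mapRange_apply]
  exact hD8 a c t q hq

lemma pi_mul_fixed_left (hD7 : P.LeftLinear) {q : R} (hq : q ∈ P.fixed) (a : G) (t : R) :
    P.π a (q*t) = Finsupp.mapRange (q * ·) (mul_zero q) (P.π a t) := by
  ext c
  rw [Finsupp.mapRange_apply]
  exact hD7 a c q hq t

lemma mul_s_single {s : G →₀ R} (hs : s ∈ P.fixedS)
    (hc : ∀ r : R, P.mul s (Finsupp.single 1 r) = P.mul (Finsupp.single 1 r) s)
    (g : G) (r : R) :
    P.mul s (Finsupp.single g r) = s.sum fun h q => Finsupp.single (h*g) (r*q) := by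
  rw [mul_s_single_raw]
  have : (s.sum fun h q => (P.π h r).sum fun c w => Finsupp.single (c*g) (q*w))
      = Finsupp.mapDomain (· * g)
        (s.sum fun h q => (P.π h r).sum fun c w => Finsupp.single c (q*w)) := by
    rw [shift2 g s (fun h _ => P.π h r) (fun _ _ c => c) (fun _ q _ w => q*w)]
  rw [this, H1fin P hs hc r, shift1 g s (fun h => h) (fun _ q => r*q)]

end Aux3

section Aux4
open Finsupp
variable {R : Type*} [NonAssocRing R] {G : Type*} [CommMonoid G] (P : GDeriv R G)

lemma single_one_mul_single_one (r u : R) :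
    P.mul (Finsupp.single 1 r) (Finsupp.single 1 u) = Finsupp.single 1 (r*u) := by
  rw [StmtAux.mul_single_single, P.d1, Finsupp.sum_single_index (by simp), one_mul]

lemma LHS_full {s : G →₀ R} (hs : s ∈ P.fixedS) (a : G) (r : R) (b : G) (t : R) :
    P.mul (P.mul (Finsupp.single a r) s) (Finsupp.single b t)
      = (P.π a t).sum fun f u => s.sum fun h q =>
          (P.π h u).sum fun d w => Finsupp.single (d*(f*b)) ((r*q)*w) := by
  rw [single_mul_fixed P hs,
    mul_sumform_single P s (fun h => a*h) (fun _ q => r*q)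
      (fun _ => mul_zero r) (fun _ x y => mul_add r x y) b t]
  refine Eq.trans (Finsupp.sum_congr fun h _ => ?_) (Finsupp.sum_comm s (P.π a t) _)
  rw [pi_mul_sum P a h t (fun c w => Finsupp.single (c*b) ((r * s h)*w))
    (by intro g; simp) (by intro g x y; simp only [mul_add, Finsupp.single_add])]
  refine Finsupp.sum_congr fun f _ => Finsupp.sum_congr fun d _ => ?_
  rw [mul_assoc]

lemma HAfin {s : G →₀ R} (hs : s ∈ P.fixedS)
    (hc : ∀ r : R, P.mul s (Finsupp.single 1 r) = P.mul (Finsupp.single 1 r) s)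
    (hA : ∀ r u : R, P.mul (P.mul s (Finsupp.single 1 r)) (Finsupp.single 1 u)
      = P.mul s (P.mul (Finsupp.single 1 r) (Finsupp.single 1 u))) (r u : R) :
    (s.sum fun h q => (P.π h u).sum fun d w => Finsupp.single d ((r*q)*w))
      = s.sum fun h q => Finsupp.single h ((r*u)*q) := by
  have h1 := hA r u
  rw [mul_s_single_one P hs hc r,
    mul_sumform_single P s (fun h => h) (fun _ q => r*q)
      (fun _ => mul_zero r) (fun _ x y => mul_add r x y) 1 u,
    single_one_mul_single_one, mul_s_single_one P hs hc (r*u)] at h1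
  simp only [mul_one] at h1
  exact h1

lemma HBfin {s : G →₀ R} (hs : s ∈ P.fixedS)
    (hc : ∀ r : R, P.mul s (Finsupp.single 1 r) = P.mul (Finsupp.single 1 r) s)
    (hB : ∀ r u : R, P.mul (P.mul (Finsupp.single 1 r) s) (Finsupp.single 1 u)
      = P.mul (Finsupp.single 1 r) (P.mul s (Finsupp.single 1 u))) (r u : R) :
    (s.sum fun h q => (P.π h u).sum fun d w => Finsupp.single d ((r*q)*w))
      = s.sum fun h q => Finsupp.single h (r*(u*q)) := by
  have h1 := hB r u
  rw [one_mul_fixed P hs r,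
    mul_sumform_single P s (fun h => h) (fun _ q => r*q)
      (fun _ => mul_zero r) (fun _ x y => mul_add r x y) 1 u,
    mul_s_single_one P hs hc u, single_one_mul,
    sum_single_shape s (fun h => h) (fun _ q => u*q)
      (fun g x => Finsupp.single g (r*x)) (by intro g; simp)
      (by intro g x y; simp only [mul_add, Finsupp.single_add])] at h1
  simp only [mul_one] at h1
  exact h1

lemma LHS_HA {s : G →₀ R} (hs : s ∈ P.fixedS)
    (hc : ∀ r : R, P.mul s (Finsupp.single 1 r) = P.mul (Finsupp.single 1 r) s)
    (hA : ∀ r u : R, P.mul (P.mul s (Finsupp.single 1 r)) (Finsupp.single 1 u)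
      = P.mul s (P.mul (Finsupp.single 1 r) (Finsupp.single 1 u)))
    (a : G) (r : R) (b : G) (t : R) :
    P.mul (P.mul (Finsupp.single a r) s) (Finsupp.single b t)
      = (P.π a t).sum fun f u => s.sum fun h q =>
          Finsupp.single (h*(f*b)) ((r*u)*q) := by
  rw [LHS_full P hs a r b t]
  refine Finsupp.sum_congr fun f _ => ?_
  have e1 : Finsupp.mapDomain (· * (f*b))
        (s.sum fun h q => (P.π h (P.π a t f)).sum fun d w => Finsupp.single d ((r*q)*w))
      = s.sum fun h q => (P.π h (P.π a t f)).sum fun d w =>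
          Finsupp.single (d*(f*b)) ((r*q)*w) :=
    shift2 (f*b) s (fun h _ => P.π h (P.π a t f)) (fun _ _ d => d) (fun _ q _ w => (r*q)*w)
  rw [HAfin P hs hc hA r (P.π a t f)] at e1
  have e2 : Finsupp.mapDomain (· * (f*b))
        (s.sum fun h q => Finsupp.single h ((r * P.π a t f)*q))
      = s.sum fun h q => Finsupp.single (h*(f*b)) ((r * P.π a t f)*q) :=
    shift1 (f*b) s (fun h => h) (fun _ q => (r * P.π a t f)*q)
  rw [e2] at e1
  exact e1.symm

lemma LHS_HB {s : G →₀ R} (hs : s ∈ P.fixedS)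
    (hc : ∀ r : R, P.mul s (Finsupp.single 1 r) = P.mul (Finsupp.single 1 r) s)
    (hB : ∀ r u : R, P.mul (P.mul (Finsupp.single 1 r) s) (Finsupp.single 1 u)
      = P.mul (Finsupp.single 1 r) (P.mul s (Finsupp.single 1 u)))
    (a : G) (r : R) (b : G) (t : R) :
    P.mul (P.mul (Finsupp.single a r) s) (Finsupp.single b t)
      = (P.π a t).sum fun f u => s.sum fun h q =>
          Finsupp.single (h*(f*b)) (r*(u*q)) := by
  rw [LHS_full P hs a r b t]
  refine Finsupp.sum_congr fun f _ => ?_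
  have e1 : Finsupp.mapDomain (· * (f*b))
        (s.sum fun h q => (P.π h (P.π a t f)).sum fun d w => Finsupp.single d ((r*q)*w))
      = s.sum fun h q => (P.π h (P.π a t f)).sum fun d w =>
          Finsupp.single (d*(f*b)) ((r*q)*w) :=
    shift2 (f*b) s (fun h _ => P.π h (P.π a t f)) (fun _ _ d => d) (fun _ q _ w => (r*q)*w)
  rw [HBfin P hs hc hB r (P.π a t f)] at e1
  have e2 : Finsupp.mapDomain (· * (f*b))
        (s.sum fun h q => Finsupp.single h (r*(P.π a t f * q)))
      = s.sum fun h q => Finsupp.single (h*(f*b)) (r*(P.π a t f * q)) :=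
    shift1 (f*b) s (fun h => h) (fun _ q => r*(P.π a t f * q))
  rw [e2] at e1
  exact e1.symm

end Aux4

section Aux5
open Finsupp
variable {R : Type*} [NonAssocRing R] {G : Type*} [CommMonoid G] (P : GDeriv R G)

lemma single_mul_sumform (a : G) (r : R) (s : G →₀ R) (idx : G → G) (φ : G → R → R) :
    P.mul (Finsupp.single a r) (s.sum fun h q => Finsupp.single (idx h) (φ h q))
      = s.sum fun h q => (P.π a (φ h q)).sum fun c w => Finsupp.single (c * idx h) (r*w) := by
  rw [StmtAux.mul_single_left]
  exact sum_single_shape s idx φ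
    (fun b' t' => (P.π a t').sum fun c w => Finsupp.single (c*b') (r*w))
    (by intro g; simp [StmtAux.pi_zero])
    (by intro g x y
        beta_reduce
        rw [P.d3]
        exact Finsupp.sum_add_index' (by simp)
          (by intro c w₁ w₂; simp only [mul_add, Finsupp.single_add]))

lemma MA {s : G →₀ R} (hs : s ∈ P.fixedS)
    (hc : ∀ r : R, P.mul s (Finsupp.single 1 r) = P.mul (Finsupp.single 1 r) s)
    (hA : ∀ r u : R, P.mul (P.mul s (Finsupp.single 1 r)) (Finsupp.single 1 u)
      = P.mul s (P.mul (Finsupp.single 1 r) (Finsupp.single 1 u)))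
    (a : G) (r : R) (b : G) (t : R) :
    P.mul (P.mul (Finsupp.single a r) s) (Finsupp.single b t)
      = P.mul (P.mul (Finsupp.single a r) (Finsupp.single b t)) s := by
  rw [LHS_HA P hs hc hA a r b t, StmtAux.mul_single_single, mul_fixed_right P hs]
  have e3 : (((P.π a t).sum fun c u => Finsupp.single (c*b) (r*u)).sum
        fun g x => s.sum fun h q => Finsupp.single (g*h) (x*q))
      = (P.π a t).sum fun c u => s.sum fun h q => Finsupp.single ((c*b)*h) ((r*u)*q) :=
    sum_single_shape (P.π a t) (fun c => c*b) (fun _ u => r*u)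
      (fun g x => s.sum fun h q => Finsupp.single (g*h) (x*q))
      (by intro g; simp)
      (by intro g x y
          rw [← Finsupp.sum_add]
          exact Finsupp.sum_congr fun h _ => by simp only [add_mul, Finsupp.single_add])
  rw [e3]
  refine Finsupp.sum_congr fun f _ => Finsupp.sum_congr fun h _ => ?_
  rw [mul_comm (f*b) h]

lemma MB8 {s : G →₀ R} (hs : s ∈ P.fixedS)
    (hc : ∀ r : R, P.mul s (Finsupp.single 1 r) = P.mul (Finsupp.single 1 r) s)
    (hB : ∀ r u : R, P.mul (P.mul (Finsupp.single 1 r) s) (Finsupp.single 1 u)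
      = P.mul (Finsupp.single 1 r) (P.mul s (Finsupp.single 1 u)))
    (h8 : P.RightLinear) (a : G) (r : R) (b : G) (t : R) :
    P.mul (P.mul (Finsupp.single a r) s) (Finsupp.single b t)
      = P.mul (Finsupp.single a r) (P.mul s (Finsupp.single b t)) := by
  rw [LHS_HB P hs hc hB a r b t, mul_s_single P hs hc b t,
    single_mul_sumform P a r s (fun h => h*b) (fun _ q => t*q)]
  have step : (s.sum fun h q => (P.π a (t*q)).sum fun c w => Finsupp.single (c*(h*b)) (r*w))
      = s.sum fun h q => (P.π a t).sum fun c u => Finsupp.single (c*(h*b)) (r*(u*q)) := by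
    refine Finsupp.sum_congr fun h _ => ?_
    rw [pi_mul_fixed_right P h8 (hs h) a t,
      Finsupp.sum_mapRange_index (by intro c; simp)]
  rw [step]
  have e := Finsupp.sum_comm s (P.π a t)
    (fun h q c u => Finsupp.single (c*(h*b)) (r*(u*q)))
  rw [e]
  refine Finsupp.sum_congr fun f _ => Finsupp.sum_congr fun h _ => ?_
  rw [mul_left_comm h f b]

lemma MB7 {s : G →₀ R} (hs : s ∈ P.fixedS)
    (hc : ∀ r : R, P.mul s (Finsupp.single 1 r) = P.mul (Finsupp.single 1 r) s)
    (hB : ∀ r u : R, P.mul (P.mul (Finsupp.single 1 r) s) (Finsupp.single 1 u)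
      = P.mul (Finsupp.single 1 r) (P.mul s (Finsupp.single 1 u)))
    (h7 : P.LeftLinear) (a : G) (r : R) (b : G) (t : R) :
    P.mul (P.mul (Finsupp.single a r) s) (Finsupp.single b t)
      = P.mul (Finsupp.single a r) (P.mul s (Finsupp.single b t)) := by
  rw [LHS_HB P hs hc hB a r b t, mul_s_single_raw P s b t, StmtAux.mul_single_left]
  have e0 : ((s.sum fun h q => (P.π h t).sum fun c w => Finsupp.single (c*b) (q*w)).sum
        fun b' t' => (P.π a t').sum fun d z => Finsupp.single (d*b') (r*z))
      = s.sum fun h q => (P.π h t).sum fun c w =>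
          (P.π a (q*w)).sum fun d z => Finsupp.single (d*(c*b)) (r*z) :=
    sum_double_shape s (fun h _ => P.π h t) (fun _ _ c => c*b) (fun _ q _ w => q*w)
      (fun b' t' => (P.π a t').sum fun d z => Finsupp.single (d*b') (r*z))
      (by intro g; simp [StmtAux.pi_zero])
      (by intro g x y
          beta_reduce
          beta_reduce
          rw [P.d3]
          exact Finsupp.sum_add_index' (by simp)
            (by intro c w₁ w₂; simp only [mul_add, Finsupp.single_add]))
  rw [e0]
  have e1 : (s.sum fun h q => (P.π h t).sum fun c w =>
        (P.π a (q*w)).sum fun d z => Finsupp.single (d*(c*b)) (r*z))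
      = s.sum fun h q => (P.π (a*h) t).sum fun c z => Finsupp.single (c*b) (r*(q*z)) := by
    refine Finsupp.sum_congr fun h _ => ?_
    have inner : ((P.π h t).sum fun c w =>
          (P.π a (s h * w)).sum fun d z => Finsupp.single (d*(c*b)) (r*z))
        = (P.π h t).sum fun c w =>
            (P.π a w).sum fun d z => Finsupp.single ((d*c)*b) (r*(s h * z)) := by
      refine Finsupp.sum_congr fun c _ => ?_
      rw [pi_mul_fixed_left P h7 (hs h) a _,
        Finsupp.sum_mapRange_index (by intro d; simp)]
      exact Finsupp.sum_congr fun d _ => by rw [mul_assoc d c b]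
    rw [inner]
    exact (pi_mul_sum' P a h t (fun x z => Finsupp.single (x*b) (r*(s h * z)))
      (by intro g; simp) (by intro g x y; simp only [mul_add, Finsupp.single_add])).symm
  rw [e1]
  have e2 : (s.sum fun h q => (P.π (a*h) t).sum fun c z => Finsupp.single (c*b) (r*(q*z)))
      = s.sum fun h q => (P.π a t).sum fun f u =>
          (P.π h u).sum fun d w => Finsupp.single (d*(f*b)) (r*(q*w)) := by
    refine Finsupp.sum_congr fun h _ => ?_
    rw [pi_mul_sum P a h t (fun c z => Finsupp.single (c*b) (r*(s h * z)))
      (by intro g; simp) (by intro g x y; simp only [mul_add, Finsupp.single_add])]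
    exact Finsupp.sum_congr fun f _ => Finsupp.sum_congr fun d _ => by rw [mul_assoc]
  rw [e2]
  have e3 := Finsupp.sum_comm s (P.π a t)
    (fun h q f u => (P.π h u).sum fun d w => Finsupp.single (d*(f*b)) (r*(q*w)))
  rw [e3]
  refine Finsupp.sum_congr fun f _ => ?_
  have e4 : Finsupp.mapDomain (· * (f*b))
        (s.sum fun h q => (P.π h (P.π a t f)).sum fun d w => Finsupp.single d (r*(q*w)))
      = s.sum fun h q => (P.π h (P.π a t f)).sum fun d w =>
          Finsupp.single (d*(f*b)) (r*(q*w)) :=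
    shift2 (f*b) s (fun h _ => P.π h (P.π a t f)) (fun _ _ d => d) (fun _ q _ w => r*(q*w))
  rw [H1fin_r P hs hc r (P.π a t f)] at e4
  have e5 : Finsupp.mapDomain (· * (f*b))
        (s.sum fun h q => Finsupp.single h (r*(P.π a t f * q)))
      = s.sum fun h q => Finsupp.single (h*(f*b)) (r*(P.π a t f * q)) :=
    shift1 (f*b) s (fun h => h) (fun _ q => r*(P.π a t f * q))
  rw [e5] at e4
  exact e4

lemma mul_s_comm {s : G →₀ R} (hs : s ∈ P.fixedS)
    (hc : ∀ r : R, P.mul s (Finsupp.single 1 r) = P.mul (Finsupp.single 1 r) s) :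
    ∀ v, P.mul s v = P.mul v s := by
  intro v
  induction v using Finsupp.induction with
  | zero => rw [StmtAux.mul_zero_right, StmtAux.mul_zero_left]
  | single_add g r v' _ _ ih =>
      rw [StmtAux.mul_add_right, StmtAux.mul_add_left, ih]
      congr 1
      rw [mul_s_single P hs hc g r, single_mul_fixed P hs g r]
      exact Finsupp.sum_congr fun h _ => by rw [mul_comm g h]

lemma biadd_ext (F H : (G →₀ R) → (G →₀ R) → (G →₀ R))
    (hF1 : ∀ v₁ v₂ w, F (v₁+v₂) w = F v₁ w + F v₂ w)
    (hF2 : ∀ v w₁ w₂, F v (w₁+w₂) = F v w₁ + F v w₂)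
    (hF01 : ∀ w, F 0 w = 0) (hF02 : ∀ v, F v 0 = 0)
    (hH1 : ∀ v₁ v₂ w, H (v₁+v₂) w = H v₁ w + H v₂ w)
    (hH2 : ∀ v w₁ w₂, H v (w₁+w₂) = H v w₁ + H v w₂)
    (hH01 : ∀ w, H 0 w = 0) (hH02 : ∀ v, H v 0 = 0)
    (hsingle : ∀ (a : G) (r : R) (b : G) (t : R),
      F (Finsupp.single a r) (Finsupp.single b t) = H (Finsupp.single a r) (Finsupp.single b t)) :
    ∀ v w, F v w = H v w := by
  have hsw : ∀ (a : G) (r : R) (w : G →₀ R), F (Finsupp.single a r) w = H (Finsupp.single a r) w := by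
    intro a r w
    induction w using Finsupp.induction with
    | zero => rw [hF02, hH02]
    | single_add b t w' _ _ ih => rw [hF2, hH2, ih, hsingle]
  intro v w
  induction v using Finsupp.induction with
  | zero => rw [hF01, hH01]
  | single_add a r v' _ _ ih => rw [hF1, hH1, ih, hsw]

end Aux5

end StmtAux

/-- Let `G` be commutative and `π` a strong `G`-derivation.  If
`s ∈ S^G`, then `s ∈ Z(S)` iff `s` commutes and associates with all elements
of `R`. -/
theorem stmt7 {R : Type*} [NonAssocRing R] {G : Type*} [CommMonoid G]
    (P : GDeriv R G) (hP : P.Strong) {s : G →₀ R} (hs : s ∈ P.fixedS) :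
    s ∈ P.Z ↔
      (∀ r : R, P.commS s (Finsupp.single 1 r) = 0) ∧
      (∀ r t : R,
        P.assocS s (Finsupp.single 1 r) (Finsupp.single 1 t) = 0 ∧
        P.assocS (Finsupp.single 1 r) s (Finsupp.single 1 t) = 0 ∧
        P.assocS (Finsupp.single 1 r) (Finsupp.single 1 t) s = 0) := by
  constructor
  · rintro ⟨hC, ⟨hl, hm⟩, hr⟩
    exact ⟨fun r => sub_eq_zero.mpr (hC _),
      fun r t => ⟨hl _ _, hm _ _, hr _ _⟩⟩
  · rintro ⟨h1, h2⟩
    have hc : ∀ r : R, P.mul s (Finsupp.single 1 r) = P.mul (Finsupp.single 1 r) s :=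
      fun r => sub_eq_zero.mp (h1 r)
    have hA : ∀ r u : R, P.mul (P.mul s (Finsupp.single 1 r)) (Finsupp.single 1 u)
        = P.mul s (P.mul (Finsupp.single 1 r) (Finsupp.single 1 u)) :=
      fun r u => sub_eq_zero.mp (h2 r u).1
    have hB : ∀ r u : R, P.mul (P.mul (Finsupp.single 1 r) s) (Finsupp.single 1 u)
        = P.mul (Finsupp.single 1 r) (P.mul s (Finsupp.single 1 u)) :=
      fun r u => sub_eq_zero.mp (h2 r u).2.1
    have hMB : ∀ (a : G) (r : R) (b : G) (t : R),
        P.mul (P.mul (Finsupp.single a r) s) (Finsupp.single b t)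
          = P.mul (Finsupp.single a r) (P.mul s (Finsupp.single b t)) := by
      rcases hP with h7 | h8
      · exact fun a r b t => StmtAux.MB7 P hs hc hB h7 a r b t
      · exact fun a r b t => StmtAux.MB8 P hs hc hB h8 a r b t
    have hMA : ∀ (a : G) (r : R) (b : G) (t : R),
        P.mul (P.mul (Finsupp.single a r) s) (Finsupp.single b t)
          = P.mul (P.mul (Finsupp.single a r) (Finsupp.single b t)) s :=
      fun a r b t => StmtAux.MA P hs hc hA a r b t
    have hMAall : ∀ v w, P.mul (P.mul v s) w = P.mul (P.mul v w) s :=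
      StmtAux.biadd_ext (fun v w => P.mul (P.mul v s) w) (fun v w => P.mul (P.mul v w) s)
        (fun v₁ v₂ w => by simp only [StmtAux.mul_add_left, StmtAux.mul_add_left])
        (fun v w₁ w₂ => by simp only [StmtAux.mul_add_right])
        (fun w => by simp only [StmtAux.mul_zero_left, StmtAux.mul_zero_left])
        (fun v => by simp only [StmtAux.mul_zero_right])
        (fun v₁ v₂ w => by simp only [StmtAux.mul_add_left, StmtAux.mul_add_left])
        (fun v w₁ w₂ => by simp only [StmtAux.mul_add_right, StmtAux.mul_add_left])
        (fun w => by simp only [StmtAux.mul_zero_left, StmtAux.mul_zero_left])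
        (fun v => by simp only [StmtAux.mul_zero_right, StmtAux.mul_zero_left])
        hMA
    have hMBall : ∀ v w, P.mul (P.mul v s) w = P.mul v (P.mul s w) :=
      StmtAux.biadd_ext (fun v w => P.mul (P.mul v s) w) (fun v w => P.mul v (P.mul s w))
        (fun v₁ v₂ w => by simp only [StmtAux.mul_add_left, StmtAux.mul_add_left])
        (fun v w₁ w₂ => by simp only [StmtAux.mul_add_right])
        (fun w => by simp only [StmtAux.mul_zero_left, StmtAux.mul_zero_left])
        (fun v => by simp only [StmtAux.mul_zero_right])
        (fun v₁ v₂ w => by simp only [StmtAux.mul_add_left])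
        (fun v w₁ w₂ => by simp only [StmtAux.mul_add_right, StmtAux.mul_add_right])
        (fun w => by simp only [StmtAux.mul_zero_left])
        (fun v => by simp only [StmtAux.mul_zero_right, StmtAux.mul_zero_right])
        hMB
    have hcomm := StmtAux.mul_s_comm P hs hc
    refine ⟨fun v => hcomm v, ⟨fun v w => ?_, fun v w => ?_⟩, fun v w => ?_⟩
    · show P.mul (P.mul s v) w - P.mul s (P.mul v w) = 0
      rw [hcomm v, hcomm (P.mul v w), hMAall v w, sub_self]
    · exact sub_eq_zero.mpr (hMBall v w)
    · show P.mul (P.mul v w) s - P.mul v (P.mul w s) = 0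
      rw [← hcomm w, ← hMBall v w, hMAall v w, sub_self]
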